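/- arXiv:2505.19431 — 3 statements merged into one kernel-verified Lean document; each statement's English description precedes it below -/
import Mathlib

section
/- There exists a constant c > 0, depending only on E, x_t, σ and the dimension d, such that for every integer L ≥ 1 the Monte Carlo score estimator satisfies ‖E[S_L] − s*‖ ≤ c/√L and E[‖S_L − E[S_L]‖²] ≤ c²/L, where the expectations are taken over the i.i.d. samples X₁,…,X_L ∼ N(x_t, σ²I). -/
open MeasureTheory ProbabilityTheory Function Set

section helpers
variable {α : Type*} [MeasurableSpace α]

lemma pi_map_eval (γ : Measure α) [IsProbabilityMeasure γ] {L : ℕ} (i : Fin L) :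
    (Measure.pi fun _ : Fin L => γ).map (Function.eval i) = γ := by
  ext s hs
  rw [Measure.map_apply (measurable_pi_apply i) hs, Set.eval_preimage, Measure.pi_pi]
  rw [Finset.prod_eq_single i (fun j _ hj => by simp [Function.update_of_ne hj]) (by simp)]
  simp

lemma pi_map_pair (γ : Measure α) [IsProbabilityMeasure γ] {L : ℕ} {i j : Fin L} (hij : i ≠ j) :
    (Measure.pi fun _ : Fin L => γ).map (fun X => (X i, X j)) = γ.prod γ := by
  refine (Measure.prod_eq fun s t hs ht => ?_).symm
  rw [Measure.map_apply ((measurable_pi_apply i).prodMk (measurable_pi_apply j)) (hs.prod ht)]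
  have hpre : (fun X : Fin L → α => (X i, X j)) ⁻¹' (s ×ˢ t)
      = Set.univ.pi (Function.update (Function.update (fun _ => Set.univ) i s) j t) := by
    ext X
    simp only [Set.mem_preimage, Set.mem_prod, Set.mem_pi, Set.mem_univ, forall_true_left]
    constructor
    · rintro ⟨h1, h2⟩ k
      rcases eq_or_ne k j with rfl | hkj
      · simpa using h2
      · rcases eq_or_ne k i with rfl | hki
        · simpa [Function.update_of_ne hij, Function.update_self] using h1
        · simp [Function.update_of_ne hkj, Function.update_of_ne hki]
    · intro h
      refine ⟨?_, ?_⟩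
      · have := h i; simpa [Function.update_of_ne hij] using this
      · have := h j; simpa using this
  rw [hpre, Measure.pi_pi]
  have : ∀ k, γ (Function.update (Function.update (fun _ => (Set.univ : Set α)) i s) j t k)
      = Function.update (Function.update (fun _ => γ (Set.univ : Set α)) i (γ s)) j (γ t) k := by
    intro k
    rcases eq_or_ne k j with rfl | hkj
    · simp
    · rcases eq_or_ne k i with rfl | hki
      · simp [Function.update_of_ne hij, Function.update_of_ne hkj]
      · simp [Function.update_of_ne hkj, Function.update_of_ne hki]
  rw [Finset.prod_congr rfl (fun k _ => this k)]
  rw [Finset.prod_update_of_mem (Finset.mem_univ j)]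
  rw [Finset.prod_update_of_mem (Finset.mem_sdiff.mpr ⟨Finset.mem_univ i, by simp [hij]⟩)]
  simp [mul_comm]


lemma bdd_integrable' {β : Type*} [MeasurableSpace β] {μ : Measure β} [IsProbabilityMeasure μ]
    {G : Type*} [NormedAddCommGroup G] {F : β → G} (hF : AEStronglyMeasurable F μ)
    {c : ℝ} (hc : ∀ x, ‖F x‖ ≤ c) : Integrable F μ :=
  (integrable_const c).mono' hF (ae_of_all _ hc)

lemma integral_le_sqrt_integral_sq {Ω : Type*} [MeasurableSpace Ω] {μ : Measure Ω}
    [IsProbabilityMeasure μ] {Z : Ω → ℝ} (hm : AEStronglyMeasurable Z μ)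
    {c : ℝ} (hc : ∀ x, |Z x| ≤ c) (hnn : ∀ x, 0 ≤ Z x) :
    ∫ x, Z x ∂μ ≤ Real.sqrt (∫ x, Z x ^ 2 ∂μ) := by
  have hZi : Integrable Z μ := bdd_integrable' hm (by simpa using hc)
  have hZ2m : AEStronglyMeasurable (fun x => Z x ^ 2) μ := by
    exact (hm.mul hm).congr (ae_of_all _ fun x => by simp [pow_two])
  have hZ2i : Integrable (fun x => Z x ^ 2) μ := by
    refine bdd_integrable' (c := c ^ 2) hZ2m fun x => ?_
    calc ‖Z x ^ 2‖ = |Z x| ^ 2 := by rw [Real.norm_eq_abs, abs_pow]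
      _ ≤ c ^ 2 := pow_le_pow_left₀ (abs_nonneg _) (hc x) 2
  set a := ∫ x, Z x ∂μ with ha
  have hann : 0 ≤ a := integral_nonneg hnn
  have key : a ^ 2 ≤ ∫ x, Z x ^ 2 ∂μ := by
    have h1 : 0 ≤ ∫ x, (Z x - a) ^ 2 ∂μ := integral_nonneg fun x => sq_nonneg _
    have h2 : ∫ x, (Z x - a) ^ 2 ∂μ = (∫ x, Z x ^ 2 ∂μ) - a ^ 2 := by
      have he : ∀ x, (Z x - a) ^ 2 = Z x ^ 2 - 2 * a * Z x + a ^ 2 := fun x => by ring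
      have I1 : Integrable (fun x => Z x ^ 2 - 2 * a * Z x) μ := by
        have := hZ2i.sub (hZi.const_mul (2 * a))
        exact this
      rw [integral_congr_ae (ae_of_all _ he),
        integral_add I1 (integrable_const _),
        integral_sub hZ2i (hZi.const_mul (2 * a)), integral_const_mul, integral_const]
      simp only [probReal_univ, measure_univ, ENNReal.toReal_one, smul_eq_mul, one_mul, ← ha]
      ring
    linarith
  exact (Real.le_sqrt hann (integral_nonneg fun x => sq_nonneg _)).mpr key

lemma mean_sq_min {Ω H : Type*} [MeasurableSpace Ω] {μ : Measure Ω} [IsProbabilityMeasure μ]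
    [NormedAddCommGroup H] [InnerProductSpace ℝ H] [CompleteSpace H]
    {F : Ω → H} (hm : AEStronglyMeasurable F μ) {c0 : ℝ} (hb : ∀ x, ‖F x‖ ≤ c0) (c : H) :
    ∫ x, ‖F x - ∫ y, F y ∂μ‖ ^ 2 ∂μ ≤ ∫ x, ‖F x - c‖ ^ 2 ∂μ := by
  have hFi : Integrable F μ := bdd_integrable' hm hb
  set m := ∫ y, F y ∂μ with hmdef
  have hFmi : Integrable (fun x => F x - m) μ := hFi.sub (integrable_const m)
  have hFmm : AEStronglyMeasurable (fun x => F x - m) μ := hFmi.aestronglyMeasurable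
  have hbm : ∀ x, ‖F x - m‖ ≤ c0 + ‖m‖ := fun x =>
    (norm_sub_le _ _).trans (add_le_add_left (hb x) _)
  have hsqi : Integrable (fun x => ‖F x - m‖ ^ 2) μ := by
    refine bdd_integrable' (c := (c0 + ‖m‖) ^ 2)
      ((hFmm.norm.mul hFmm.norm).congr (ae_of_all _ fun x => by simp [pow_two])) fun x => ?_
    calc ‖‖F x - m‖ ^ 2‖ = ‖F x - m‖ ^ 2 := by
          rw [Real.norm_eq_abs, abs_of_nonneg (sq_nonneg _)]
      _ ≤ (c0 + ‖m‖) ^ 2 := pow_le_pow_left₀ (norm_nonneg _) (hbm x) 2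
  have hinni : Integrable (fun x => (inner ℝ (F x - m) (m - c) : ℝ)) μ := by
    refine bdd_integrable' (c := (c0 + ‖m‖) * ‖m - c‖)
      (hFmm.inner aestronglyMeasurable_const) fun x => ?_
    calc ‖(inner ℝ (F x - m) (m - c) : ℝ)‖ ≤ ‖F x - m‖ * ‖m - c‖ := norm_inner_le_norm _ _
      _ ≤ (c0 + ‖m‖) * ‖m - c‖ := by
        exact mul_le_mul_of_nonneg_right (hbm x) (norm_nonneg _)
  have hexp : ∀ x, ‖F x - c‖ ^ 2
      = ‖F x - m‖ ^ 2 + 2 * (inner ℝ (F x - m) (m - c) : ℝ) + ‖m - c‖ ^ 2 := by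
    intro x
    have : F x - c = (F x - m) + (m - c) := by abel
    rw [this, norm_add_sq_real]
  have I2 : Integrable (fun x => ‖F x - m‖ ^ 2 + 2 * (inner ℝ (F x - m) (m - c) : ℝ)) μ := by
    have := hsqi.add (hinni.const_mul 2); exact this
  have I3 : Integrable (fun x => 2 * (inner ℝ (F x - m) (m - c) : ℝ)) μ := by
    have := hinni.const_mul 2; simpa using this
  rw [integral_congr_ae (ae_of_all _ hexp),
    integral_add I2 (integrable_const _),
    integral_add hsqi I3, integral_const_mul, integral_const]
  have hz : ∫ x, (inner ℝ (F x - m) (m - c) : ℝ) ∂μ = 0 := by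
    have : ∀ x, (inner ℝ (F x - m) (m - c) : ℝ) = (inner ℝ (m - c) (F x - m) : ℝ) := fun x =>
      real_inner_comm _ _
    rw [integral_congr_ae (ae_of_all _ this), integral_inner hFmi]
    have : ∫ x, (F x - m) ∂μ = 0 := by
      rw [integral_sub hFi (integrable_const m), integral_const]
      simp [hmdef]
    rw [this, inner_zero_right]
  rw [hz]
  have : (0:ℝ) ≤ ‖m - c‖ ^ 2 := sq_nonneg _
  simp only [probReal_univ, measure_univ, ENNReal.toReal_one, smul_eq_mul, one_mul, mul_zero, add_zero]
  linarith

variable {H : Type*} [NormedAddCommGroup H] [InnerProductSpace ℝ H] [CompleteSpace H]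

lemma iid_sum_sq {γ : Measure α} [IsProbabilityMeasure γ] {L : ℕ} {f : α → H}
    (hf : StronglyMeasurable f) {C : ℝ} (hC : ∀ x, ‖f x‖ ≤ C)
    (h0 : ∫ x, f x ∂γ = 0) :
    ∫ X : Fin L → α, ‖∑ i, f (X i)‖ ^ 2 ∂(Measure.pi fun _ => γ) ≤ L * C ^ 2 := by
  set μL : Measure (Fin L → α) := Measure.pi fun _ => γ with hμL
  have hfi : Integrable f γ := bdd_integrable' hf.aestronglyMeasurable hC
  have hmeas : ∀ i : Fin L, StronglyMeasurable fun X : Fin L → α => f (X i) :=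
    fun i => hf.comp_measurable (measurable_pi_apply i)
  have hterm_meas : ∀ i j : Fin L,
      StronglyMeasurable fun X : Fin L → α => (inner ℝ (f (X i)) (f (X j)) : ℝ) :=
    fun i j => (hmeas i).inner (hmeas j)
  have hCS : ∀ (x y : α), ‖(inner ℝ (f x) (f y) : ℝ)‖ ≤ C * C := by
    intro x y
    calc ‖(inner ℝ (f x) (f y) : ℝ)‖ ≤ ‖f x‖ * ‖f y‖ := norm_inner_le_norm _ _
      _ ≤ C * C := mul_le_mul (hC x) (hC y) (norm_nonneg _) ((norm_nonneg _).trans (hC x))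
  have hterm_int : ∀ i j : Fin L,
      Integrable (fun X : Fin L → α => (inner ℝ (f (X i)) (f (X j)) : ℝ)) μL :=
    fun i j => bdd_integrable' (hterm_meas i j).aestronglyMeasurable (fun X => hCS _ _)
  have hexpand : ∀ X : Fin L → α,
      ‖∑ i, f (X i)‖ ^ 2 = ∑ i, ∑ j, (inner ℝ (f (X i)) (f (X j)) : ℝ) := by
    intro X
    rw [← real_inner_self_eq_norm_sq, sum_inner]
    exact Finset.sum_congr rfl fun i _ => by rw [inner_sum]
  calc ∫ X, ‖∑ i, f (X i)‖ ^ 2 ∂μL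
      = ∫ X, ∑ i, ∑ j, (inner ℝ (f (X i)) (f (X j)) : ℝ) ∂μL := by
        exact integral_congr_ae (ae_of_all _ hexpand)
    _ = ∑ i, ∑ j, ∫ X, (inner ℝ (f (X i)) (f (X j)) : ℝ) ∂μL := by
        rw [integral_finset_sum _ fun i _ => integrable_finset_sum _ fun j _ => hterm_int i j]
        exact Finset.sum_congr rfl fun i _ => integral_finset_sum _ fun j _ => hterm_int i j
    _ = ∑ i : Fin L, ∫ X, (inner ℝ (f (X i)) (f (X i)) : ℝ) ∂μL := by
        refine Finset.sum_congr rfl fun i _ => ?_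
        refine Finset.sum_eq_single i (fun j _ hji => ?_) (by simp)
        -- cross term zero for j ≠ i
        have hij : i ≠ j := fun h => hji h.symm
        have hmap := pi_map_pair γ hij
        have hm : AEMeasurable (fun X : Fin L → α => (X i, X j)) μL :=
          ((measurable_pi_apply i).prodMk (measurable_pi_apply j)).aemeasurable
        have hgm : AEStronglyMeasurable (fun p : α × α => (inner ℝ (f p.1) (f p.2) : ℝ))
            (γ.prod γ) :=
          ((hf.comp_measurable measurable_fst).inner
            (hf.comp_measurable measurable_snd)).aestronglyMeasurable
        have : ∫ X, (inner ℝ (f (X i)) (f (X j)) : ℝ) ∂μL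
            = ∫ p : α × α, (inner ℝ (f p.1) (f p.2) : ℝ) ∂(γ.prod γ) := by
          rw [← hmap, integral_map hm (hmap ▸ hgm)]
        rw [this]
        have hint : Integrable (fun p : α × α => (inner ℝ (f p.1) (f p.2) : ℝ)) (γ.prod γ) :=
          bdd_integrable' hgm fun p => hCS _ _
        rw [integral_prod _ hint]
        have : ∀ x, ∫ y, (inner ℝ (f x) (f y) : ℝ) ∂γ = 0 := by
          intro x
          rw [integral_inner hfi, h0, inner_zero_right]
        simp [this]
    _ ≤ ∑ i : Fin L, C ^ 2 := by
        refine Finset.sum_le_sum fun i _ => ?_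
        have hmap := pi_map_eval γ i
        have : ∫ X, (inner ℝ (f (X i)) (f (X i)) : ℝ) ∂μL = ∫ x, (inner ℝ (f x) (f x) : ℝ) ∂γ := by
          rw [← hmap, integral_map (measurable_pi_apply i).aemeasurable
            (hmap ▸ ((hf.inner hf).aestronglyMeasurable))]
        rw [this]
        calc ∫ x, (inner ℝ (f x) (f x) : ℝ) ∂γ ≤ ∫ _x, C ^ 2 ∂γ := by
              refine integral_mono_of_nonneg (ae_of_all _ fun x => real_inner_self_nonneg)
                (integrable_const _) (ae_of_all _ fun x => ?_)
              show (inner ℝ (f x) (f x) : ℝ) ≤ C ^ 2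
              rw [real_inner_self_eq_norm_sq]
              exact pow_le_pow_left₀ (norm_nonneg _) (hC x) 2
          _ = C ^ 2 := by simp
    _ = L * C ^ 2 := by simp [mul_comm]

end helpers


noncomputable def gaussVec (d : ℕ) (xt : EuclideanSpace ℝ (Fin d)) (σ : ℝ) :
    Measure (EuclideanSpace ℝ (Fin d)) :=
  (Measure.pi fun i => gaussianReal (xt i) ((σ ^ 2).toNNReal)).map
    (MeasurableEquiv.toLp 2 (Fin d → ℝ))

set_option maxHeartbeats 1000000 in
/-- Bias and variance bounds for the Monte Carlo score estimator. -/
theorem stmt_0 (d : ℕ) (hd : 1 ≤ d)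
    (E : EuclideanSpace ℝ (Fin d) → ℝ) (Emin ME : ℝ) (K : NNReal)
    (hE : Differentiable ℝ E)
    (hEmin : ∀ x, Emin ≤ E x)
    (hLip : LipschitzWith K (fun x => gradient E x))
    (hME : ∀ x, ‖gradient E x‖ ≤ ME)
    (xt : EuclideanSpace ℝ (Fin d)) (σ : ℝ) (hσ : 0 < σ) :
    ∃ c : ℝ, 0 < c ∧ ∀ L : ℕ, 1 ≤ L →
      (let γ : Measure (EuclideanSpace ℝ (Fin d)) := gaussVec d xt σ
       let μL : Measure (Fin L → EuclideanSpace ℝ (Fin d)) := Measure.pi fun _ => γ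
       let SL : (Fin L → EuclideanSpace ℝ (Fin d)) → EuclideanSpace ℝ (Fin d) :=
         fun X => (∑ i, Real.exp (-(E (X i))))⁻¹ •
           ∑ i, Real.exp (-(E (X i))) • (-(gradient E (X i)))
       let sstar : EuclideanSpace ℝ (Fin d) :=
         (∫ x, Real.exp (-(E x)) ∂γ)⁻¹ • ∫ x, Real.exp (-(E x)) • (-(gradient E x)) ∂γ
       ‖(∫ X, SL X ∂μL) - sstar‖ ≤ c / Real.sqrt L ∧
       (∫ X, ‖SL X - ∫ Y, SL Y ∂μL‖ ^ 2 ∂μL) ≤ c ^ 2 / L) := by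
  classical
  have hMEnn : 0 ≤ ME := le_trans (norm_nonneg _) (hME 0)
  set M' : ℝ := ME + 1 with hM'def
  have hM' : 0 < M' := by positivity
  have hgradb : ∀ x, ‖gradient E x‖ ≤ M' := fun x => (hME x).trans (by linarith)
  set C0 : ℝ := Real.exp (-Emin) with hC0def
  have hC0 : 0 < C0 := Real.exp_pos _
  set w : EuclideanSpace ℝ (Fin d) → ℝ := fun x => Real.exp (-(E x)) with hwdef
  set g : EuclideanSpace ℝ (Fin d) → EuclideanSpace ℝ (Fin d) :=
    fun x => Real.exp (-(E x)) • (-(gradient E x)) with hgdef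
  have hwpos : ∀ x, 0 < w x := fun x => Real.exp_pos _
  have hwle : ∀ x, w x ≤ C0 := fun x => Real.exp_le_exp.mpr (neg_le_neg (hEmin x))
  have hwnorm : ∀ x, ‖w x‖ ≤ C0 := fun x => by
    rw [Real.norm_eq_abs, abs_of_pos (hwpos x)]; exact hwle x
  have hgb : ∀ x, ‖g x‖ ≤ C0 * M' := by
    intro x
    rw [hgdef]
    rw [norm_smul, Real.norm_eq_abs, abs_of_pos (hwpos x), norm_neg]
    exact mul_le_mul (hwle x) (hgradb x) (norm_nonneg _) hC0.le
  have hgradc : Continuous fun x => gradient E x := hLip.continuous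
  have hwc : Continuous w := Real.continuous_exp.comp hE.continuous.neg
  have hgc : Continuous g := hwc.smul hgradc.neg
  set γ0 : Measure (EuclideanSpace ℝ (Fin d)) := gaussVec d xt σ with hγ0def
  haveI : IsProbabilityMeasure γ0 := by
    rw [hγ0def, gaussVec]
    exact Measure.isProbabilityMeasure_map (MeasurableEquiv.measurable _).aemeasurable
  have hwsm : StronglyMeasurable w := hwc.stronglyMeasurable
  have hgsm : StronglyMeasurable g := hgc.stronglyMeasurable
  have hwint : Integrable w γ0 := bdd_integrable' hwsm.aestronglyMeasurable hwnorm
  have hgint : Integrable g γ0 := bdd_integrable' hgsm.aestronglyMeasurable hgb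
  set A : ℝ := ∫ x, w x ∂γ0 with hAdef
  set B : EuclideanSpace ℝ (Fin d) := ∫ x, g x ∂γ0 with hBdef
  have hApos : 0 < A := by
    rw [hAdef, integral_pos_iff_support_of_nonneg (fun x => (hwpos x).le) hwint]
    have hsupp : Function.support w = Set.univ := by
      ext x; simp [Function.mem_support, (hwpos x).ne']
    rw [hsupp]
    simp
  have hAle : A ≤ C0 := by
    rw [hAdef]
    calc ∫ x, w x ∂γ0 ≤ ∫ _x, C0 ∂γ0 := integral_mono hwint (integrable_const _) hwle
      _ = C0 := by simp
  have hBle : ‖B‖ ≤ C0 * M' := by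
    rw [hBdef]
    calc ‖∫ x, g x ∂γ0‖ ≤ ∫ x, ‖g x‖ ∂γ0 := norm_integral_le_integral_norm _
      _ ≤ ∫ _x, C0 * M' ∂γ0 :=
        integral_mono (bdd_integrable' hgsm.aestronglyMeasurable.norm
          (fun x => by rw [norm_norm]; exact hgb x)) (integrable_const _) hgb
      _ = C0 * M' := by simp
  refine ⟨4 * A⁻¹ * C0 * M', by positivity, ?_⟩
  intro L hL
  set c : ℝ := 4 * A⁻¹ * C0 * M' with hcdef
  have hc : 0 < c := by positivity
  have hLpos : (0:ℝ) < L := by exact_mod_cast hL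
  have hLne : (L:ℝ) ≠ 0 := hLpos.ne'
  haveI : Nonempty (Fin L) := ⟨⟨0, hL⟩⟩
  set μL : Measure (Fin L → EuclideanSpace ℝ (Fin d)) := Measure.pi fun _ => γ0 with hμLdef
  haveI : IsProbabilityMeasure μL := by rw [hμLdef]; infer_instance
  set D : (Fin L → EuclideanSpace ℝ (Fin d)) → ℝ := fun X => ∑ i, w (X i) with hDdef
  set G : (Fin L → EuclideanSpace ℝ (Fin d)) → EuclideanSpace ℝ (Fin d) :=
    fun X => ∑ i, g (X i) with hGdef
  set SL : (Fin L → EuclideanSpace ℝ (Fin d)) → EuclideanSpace ℝ (Fin d) :=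
    fun X => (D X)⁻¹ • G X with hSLdef
  set sstar : EuclideanSpace ℝ (Fin d) := A⁻¹ • B with hsstardef
  have hDpos : ∀ X, 0 < D X := fun X =>
    Finset.sum_pos (fun i _ => hwpos _) Finset.univ_nonempty
  have hDc : Continuous D := continuous_finset_sum _ fun i _ => hwc.comp (continuous_apply i)
  have hGc : Continuous G := continuous_finset_sum _ fun i _ => hgc.comp (continuous_apply i)
  have hSLc : Continuous SL := (hDc.inv₀ fun X => (hDpos X).ne').smul hGc
  have hGb : ∀ X, ‖G X‖ ≤ D X * M' := by
    intro X
    calc ‖G X‖ ≤ ∑ i, ‖g (X i)‖ := norm_sum_le _ _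
      _ ≤ ∑ i, w (X i) * M' := Finset.sum_le_sum fun i _ => by
          rw [hgdef, norm_smul, Real.norm_eq_abs, abs_of_pos (hwpos (X i)), norm_neg]
          exact mul_le_mul_of_nonneg_left (hgradb (X i)) (hwpos (X i)).le
      _ = D X * M' := by rw [hDdef, Finset.sum_mul]
  have hSLb : ∀ X, ‖SL X‖ ≤ M' := by
    intro X
    rw [hSLdef, norm_smul, Real.norm_eq_abs, abs_of_pos (inv_pos.mpr (hDpos X))]
    calc (D X)⁻¹ * ‖G X‖ ≤ (D X)⁻¹ * (D X * M') :=
        mul_le_mul_of_nonneg_left (hGb X) (inv_pos.mpr (hDpos X)).le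
      _ = M' := by rw [← mul_assoc, inv_mul_cancel₀ (hDpos X).ne', one_mul]
  have hid : ∀ X, SL X - sstar
      = A⁻¹ • (((L:ℝ)⁻¹ • G X - B) - ((L:ℝ)⁻¹ * D X - A) • SL X) := by
    intro X
    have hDne : D X ≠ 0 := (hDpos X).ne'
    have h1 : ((L:ℝ)⁻¹ * D X) • SL X = (L:ℝ)⁻¹ • G X := by
      rw [hSLdef, smul_smul, mul_assoc, mul_inv_cancel₀ hDne, mul_one]
    rw [sub_smul, h1]
    have h2 : ((L:ℝ)⁻¹ • G X - B) - ((L:ℝ)⁻¹ • G X - A • SL X) = A • SL X - B := by abel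
    rw [h2, smul_sub, smul_smul, inv_mul_cancel₀ hApos.ne', one_smul, hsstardef]
  have hΦb : ∀ X, ‖SL X - sstar‖
      ≤ A⁻¹ * (‖(L:ℝ)⁻¹ • G X - B‖ + M' * |(L:ℝ)⁻¹ * D X - A|) := by
    intro X
    rw [hid X, norm_smul, Real.norm_eq_abs, abs_of_pos (inv_pos.mpr hApos)]
    refine mul_le_mul_of_nonneg_left ?_ (inv_pos.mpr hApos).le
    calc ‖((L:ℝ)⁻¹ • G X - B) - ((L:ℝ)⁻¹ * D X - A) • SL X‖
        ≤ ‖(L:ℝ)⁻¹ • G X - B‖ + ‖((L:ℝ)⁻¹ * D X - A) • SL X‖ := norm_sub_le _ _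
      _ ≤ ‖(L:ℝ)⁻¹ • G X - B‖ + M' * |(L:ℝ)⁻¹ * D X - A| := by
          rw [norm_smul, Real.norm_eq_abs]
          have := mul_le_mul_of_nonneg_left (hSLb X) (abs_nonneg ((L:ℝ)⁻¹ * D X - A))
          linarith [this]
  have hΦsq : ∀ X, ‖SL X - sstar‖ ^ 2
      ≤ A⁻¹ ^ 2 * (2 * ‖(L:ℝ)⁻¹ • G X - B‖ ^ 2 + 2 * M' ^ 2 * |(L:ℝ)⁻¹ * D X - A| ^ 2) := by
    intro X
    have h1 : ‖SL X - sstar‖ ^ 2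
        ≤ (A⁻¹ * (‖(L:ℝ)⁻¹ • G X - B‖ + M' * |(L:ℝ)⁻¹ * D X - A|)) ^ 2 :=
      pow_le_pow_left₀ (norm_nonneg _) (hΦb X) 2
    have h2 : (‖(L:ℝ)⁻¹ • G X - B‖ + M' * |(L:ℝ)⁻¹ * D X - A|) ^ 2
        ≤ 2 * ‖(L:ℝ)⁻¹ • G X - B‖ ^ 2 + 2 * M' ^ 2 * |(L:ℝ)⁻¹ * D X - A| ^ 2 := by
      nlinarith [sq_nonneg (‖(L:ℝ)⁻¹ • G X - B‖ - M' * |(L:ℝ)⁻¹ * D X - A|)]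
    calc ‖SL X - sstar‖ ^ 2
        ≤ (A⁻¹ * (‖(L:ℝ)⁻¹ • G X - B‖ + M' * |(L:ℝ)⁻¹ * D X - A|)) ^ 2 := h1
      _ = A⁻¹ ^ 2 * (‖(L:ℝ)⁻¹ • G X - B‖ + M' * |(L:ℝ)⁻¹ * D X - A|) ^ 2 := by ring
      _ ≤ A⁻¹ ^ 2 * (2 * ‖(L:ℝ)⁻¹ • G X - B‖ ^ 2 + 2 * M' ^ 2 * |(L:ℝ)⁻¹ * D X - A| ^ 2) :=
          mul_le_mul_of_nonneg_left h2 (sq_nonneg _)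
  have hDle : ∀ X, D X ≤ L * C0 := by
    intro X
    rw [hDdef]
    calc ∑ i, w (X i) ≤ ∑ _i : Fin L, C0 := Finset.sum_le_sum fun i _ => hwle _
      _ = L * C0 := by simp [mul_comm]
  have hPb : ∀ X, ‖(L:ℝ)⁻¹ • G X - B‖ ≤ 2 * (C0 * M') := by
    intro X
    calc ‖(L:ℝ)⁻¹ • G X - B‖ ≤ ‖(L:ℝ)⁻¹ • G X‖ + ‖B‖ := norm_sub_le _ _
      _ ≤ (L:ℝ)⁻¹ * (L * C0 * M') + C0 * M' := by
          refine add_le_add ?_ hBle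
          rw [norm_smul, Real.norm_eq_abs, abs_of_pos (inv_pos.mpr hLpos)]
          refine mul_le_mul_of_nonneg_left ?_ (inv_pos.mpr hLpos).le
          calc ‖G X‖ ≤ D X * M' := hGb X
            _ ≤ (L * C0) * M' := mul_le_mul_of_nonneg_right (hDle X) hM'.le
            _ = L * C0 * M' := by ring
      _ = 2 * (C0 * M') := by
          rw [show (L:ℝ) * C0 * M' = (L:ℝ) * (C0 * M') from by ring, ← mul_assoc,
            inv_mul_cancel₀ hLne, one_mul]
          ring
  have hQb : ∀ X, |(L:ℝ)⁻¹ * D X - A| ≤ 2 * C0 := by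
    intro X
    have h1 : (L:ℝ)⁻¹ * D X ≤ C0 := by
      rw [← mul_le_mul_iff_right₀ hLpos, ← mul_assoc, mul_inv_cancel₀ hLne, one_mul]
      exact hDle X
    have h2 : 0 < (L:ℝ)⁻¹ * D X := mul_pos (inv_pos.mpr hLpos) (hDpos X)
    rw [abs_le]
    constructor <;> nlinarith [hApos, hAle]
  have hgB0 : ∫ x, (g x - B) ∂γ0 = 0 := by
    rw [integral_sub hgint (integrable_const _), integral_const]
    simp [hBdef]
  have hgBb : ∀ x, ‖g x - B‖ ≤ 2 * (C0 * M') := fun x => by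
    calc ‖g x - B‖ ≤ ‖g x‖ + ‖B‖ := norm_sub_le _ _
      _ ≤ C0 * M' + C0 * M' := add_le_add (hgb x) hBle
      _ = 2 * (C0 * M') := by ring
  have hwA0 : ∫ x, (w x - A) ∂γ0 = 0 := by
    rw [integral_sub hwint (integrable_const _), integral_const]
    simp [hAdef]
  have hwAb : ∀ x, ‖w x - A‖ ≤ C0 := fun x => by
    rw [Real.norm_eq_abs, abs_le]
    constructor
    · linarith [hwpos x, hAle]
    · linarith [hwle x, hApos]
  have hPsum := iid_sum_sq (γ := γ0) (L := L) (f := fun x => g x - B)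
    (hgsm.sub stronglyMeasurable_const) hgBb hgB0
  have hQsum := iid_sum_sq (γ := γ0) (L := L) (f := fun x => w x - A)
    (hwsm.sub stronglyMeasurable_const) hwAb hwA0
  rw [← hμLdef] at hPsum hQsum
  have hPrw : ∀ X : Fin L → EuclideanSpace ℝ (Fin d),
      (L:ℝ)⁻¹ • G X - B = (L:ℝ)⁻¹ • (∑ i, (g (X i) - B)) := by
    intro X
    rw [Finset.sum_sub_distrib, Finset.sum_const, Finset.card_univ, Fintype.card_fin,
      smul_sub, hGdef]
    congr 1
    rw [← Nat.cast_smul_eq_nsmul ℝ, smul_smul, inv_mul_cancel₀ hLne, one_smul]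
  have hQrw : ∀ X : Fin L → EuclideanSpace ℝ (Fin d),
      (L:ℝ)⁻¹ * D X - A = (L:ℝ)⁻¹ * (∑ i, (w (X i) - A)) := by
    intro X
    rw [Finset.sum_sub_distrib, Finset.sum_const, Finset.card_univ, Fintype.card_fin,
      nsmul_eq_mul, mul_sub, hDdef, ← mul_assoc, inv_mul_cancel₀ hLne, one_mul]
  have hPint : ∫ X, ‖(L:ℝ)⁻¹ • G X - B‖ ^ 2 ∂μL ≤ (L:ℝ)⁻¹ * (2 * (C0 * M')) ^ 2 := by
    have heq : ∀ X : Fin L → EuclideanSpace ℝ (Fin d),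
        ‖(L:ℝ)⁻¹ • G X - B‖ ^ 2 = ((L:ℝ)⁻¹) ^ 2 * ‖∑ i, (g (X i) - B)‖ ^ 2 := by
      intro X
      rw [hPrw X, norm_smul, Real.norm_eq_abs, abs_of_pos (inv_pos.mpr hLpos), mul_pow]
    rw [integral_congr_ae (ae_of_all _ heq), integral_const_mul]
    calc ((L:ℝ)⁻¹) ^ 2 * ∫ X, ‖∑ i, (g (X i) - B)‖ ^ 2 ∂μL
        ≤ ((L:ℝ)⁻¹) ^ 2 * (L * (2 * (C0 * M')) ^ 2) :=
          mul_le_mul_of_nonneg_left hPsum (sq_nonneg _)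
      _ = (L:ℝ)⁻¹ * (2 * (C0 * M')) ^ 2 := by field_simp
  have hQint : ∫ X, |(L:ℝ)⁻¹ * D X - A| ^ 2 ∂μL ≤ (L:ℝ)⁻¹ * C0 ^ 2 := by
    have heq : ∀ X : Fin L → EuclideanSpace ℝ (Fin d),
        |(L:ℝ)⁻¹ * D X - A| ^ 2 = ((L:ℝ)⁻¹) ^ 2 * ‖∑ i, (w (X i) - A)‖ ^ 2 := by
      intro X
      rw [hQrw X, abs_mul, abs_of_pos (inv_pos.mpr hLpos), mul_pow, Real.norm_eq_abs]
    rw [integral_congr_ae (ae_of_all _ heq), integral_const_mul]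
    calc ((L:ℝ)⁻¹) ^ 2 * ∫ X, ‖∑ i, (w (X i) - A)‖ ^ 2 ∂μL
        ≤ ((L:ℝ)⁻¹) ^ 2 * (L * C0 ^ 2) :=
          mul_le_mul_of_nonneg_left hQsum (sq_nonneg _)
      _ = (L:ℝ)⁻¹ * C0 ^ 2 := by field_simp
  have hPc : Continuous fun X : Fin L → EuclideanSpace ℝ (Fin d) => ‖(L:ℝ)⁻¹ • G X - B‖ :=
    (((continuous_const (y := (L:ℝ)⁻¹)).smul hGc).sub continuous_const).norm
  have hQc : Continuous fun X : Fin L → EuclideanSpace ℝ (Fin d) => |(L:ℝ)⁻¹ * D X - A| :=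
    ((continuous_const.mul hDc).sub continuous_const).abs
  have hPint2 : Integrable (fun X => ‖(L:ℝ)⁻¹ • G X - B‖ ^ 2) μL := by
    refine bdd_integrable' (c := (2 * (C0 * M')) ^ 2) (hPc.pow 2).aestronglyMeasurable
      fun X => ?_
    rw [Real.norm_eq_abs, abs_of_nonneg (sq_nonneg _)]
    exact pow_le_pow_left₀ (norm_nonneg _) (hPb X) 2
  have hQint2 : Integrable (fun X => |(L:ℝ)⁻¹ * D X - A| ^ 2) μL := by
    refine bdd_integrable' (c := (2 * C0) ^ 2) (hQc.pow 2).aestronglyMeasurable fun X => ?_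
    rw [Real.norm_eq_abs, abs_of_nonneg (sq_nonneg _)]
    exact pow_le_pow_left₀ (abs_nonneg _) (hQb X) 2
  have hint1 : Integrable (fun X => ‖SL X - sstar‖ ^ 2) μL := by
    refine bdd_integrable' (c := (M' + ‖sstar‖) ^ 2)
      (((hSLc.sub continuous_const).norm.pow 2).aestronglyMeasurable) fun X => ?_
    rw [Real.norm_eq_abs, abs_of_nonneg (sq_nonneg _)]
    refine pow_le_pow_left₀ (norm_nonneg _) ?_ 2
    exact (norm_sub_le _ _).trans (add_le_add_left (hSLb X) _)
  have hint2 : Integrable (fun X =>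
      A⁻¹ ^ 2 * (2 * ‖(L:ℝ)⁻¹ • G X - B‖ ^ 2 + 2 * M' ^ 2 * |(L:ℝ)⁻¹ * D X - A| ^ 2)) μL := by
    have := ((hPint2.const_mul 2).add (hQint2.const_mul (2 * M' ^ 2))).const_mul (A⁻¹ ^ 2)
    simpa using this
  have hmain : ∫ X, ‖SL X - sstar‖ ^ 2 ∂μL ≤ c ^ 2 / L := by
    have I3 : Integrable (fun X => 2 * ‖(L:ℝ)⁻¹ • G X - B‖ ^ 2) μL := by
      have := hPint2.const_mul 2; simpa using this
    have I4 : Integrable (fun X => 2 * M' ^ 2 * |(L:ℝ)⁻¹ * D X - A| ^ 2) μL := by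
      have := hQint2.const_mul (2 * M' ^ 2); simpa using this
    calc ∫ X, ‖SL X - sstar‖ ^ 2 ∂μL
        ≤ ∫ X, A⁻¹ ^ 2 * (2 * ‖(L:ℝ)⁻¹ • G X - B‖ ^ 2
            + 2 * M' ^ 2 * |(L:ℝ)⁻¹ * D X - A| ^ 2) ∂μL :=
          integral_mono hint1 hint2 hΦsq
      _ = A⁻¹ ^ 2 * (2 * ∫ X, ‖(L:ℝ)⁻¹ • G X - B‖ ^ 2 ∂μL
            + 2 * M' ^ 2 * ∫ X, |(L:ℝ)⁻¹ * D X - A| ^ 2 ∂μL) := by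
          rw [integral_const_mul, integral_add I3 I4, integral_const_mul, integral_const_mul]
      _ ≤ A⁻¹ ^ 2 * (2 * ((L:ℝ)⁻¹ * (2 * (C0 * M')) ^ 2)
            + 2 * M' ^ 2 * ((L:ℝ)⁻¹ * C0 ^ 2)) := by
          refine mul_le_mul_of_nonneg_left (add_le_add ?_ ?_) (sq_nonneg _)
          · exact mul_le_mul_of_nonneg_left hPint (by norm_num)
          · exact mul_le_mul_of_nonneg_left hQint (by positivity)
      _ ≤ c ^ 2 / L := by
          rw [hcdef, div_eq_mul_inv]
          have h10 : A⁻¹ ^ 2 * (2 * ((L:ℝ)⁻¹ * (2 * (C0 * M')) ^ 2)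
              + 2 * M' ^ 2 * ((L:ℝ)⁻¹ * C0 ^ 2))
              = 10 * (A⁻¹ ^ 2 * C0 ^ 2 * M' ^ 2 * (L:ℝ)⁻¹) := by ring
          have h16 : (4 * A⁻¹ * C0 * M') ^ 2 * (L:ℝ)⁻¹
              = 16 * (A⁻¹ ^ 2 * C0 ^ 2 * M' ^ 2 * (L:ℝ)⁻¹) := by ring
          rw [h10, h16]
          have hnn : (0:ℝ) ≤ A⁻¹ ^ 2 * C0 ^ 2 * M' ^ 2 * (L:ℝ)⁻¹ := by positivity
          linarith
  have hSLint : Integrable SL μL := bdd_integrable' hSLc.aestronglyMeasurable hSLb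
  have hΦm : AEStronglyMeasurable (fun X => ‖SL X - sstar‖) μL :=
    ((hSLc.sub continuous_const).norm).aestronglyMeasurable
  have h1 : ‖(∫ X, SL X ∂μL) - sstar‖ ≤ c / Real.sqrt L := by
    have hIsub : ∫ X, (SL X - sstar) ∂μL = (∫ X, SL X ∂μL) - sstar := by
      rw [integral_sub hSLint (integrable_const _), integral_const]
      simp
    rw [← hIsub]
    calc ‖∫ X, (SL X - sstar) ∂μL‖ ≤ ∫ X, ‖SL X - sstar‖ ∂μL :=
        norm_integral_le_integral_norm _
      _ ≤ Real.sqrt (∫ X, ‖SL X - sstar‖ ^ 2 ∂μL) := by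
          refine integral_le_sqrt_integral_sq (c := M' + ‖sstar‖) hΦm (fun X => ?_)
            (fun X => norm_nonneg _)
          rw [abs_of_nonneg (norm_nonneg _)]
          exact (norm_sub_le _ _).trans (add_le_add_left (hSLb X) _)
      _ ≤ Real.sqrt (c ^ 2 / L) := Real.sqrt_le_sqrt hmain
      _ = c / Real.sqrt L := by
          rw [Real.sqrt_div (sq_nonneg c), Real.sqrt_sq hc.le]
  have h2 : (∫ X, ‖SL X - ∫ Y, SL Y ∂μL‖ ^ 2 ∂μL) ≤ c ^ 2 / L :=
    le_trans (mean_sq_min hSLc.aestronglyMeasurable hSLb sstar) hmain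
  exact ⟨h1, h2⟩
end

section
/- Suppose that for p-almost every x ∈ X: ‖a(x) − b(x)‖ ≤ C₂, ∫_Ω ‖S(x,ω) − b(x)‖ dP(ω) ≤ c(x)/√L, and ∫_Ω ‖S(x,ω) − b(x)‖² dP(ω) ≤ c(x)²/L, where C₂ ≥ 0 and L ≥ 1 are constants and c : X → [0,∞) has c and c² integrable with respect to p. Assume moreover that (x,ω) ↦ ‖a(x) − S(x,ω)‖² is integrable with respect to p ⊗ P and x ↦ ‖a(x) − b(x)‖² is integrable with respect to p. Then | ∫_X ∫_Ω ‖a(x) − S(x,ω)‖² dP(ω) dp(x) − ∫_X ‖a(x) − b(x)‖² dp(x) | ≤ (∫_X c(x)² dp(x))/L + 2C₂ (∫_X c(x) dp(x))/√L. -/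
open MeasureTheory

/-- Bias bound for the score-matching loss when the true score `b` is replaced by an
estimator `S` with controlled first and second moments of the error. -/
theorem stmt_6 (d : ℕ) (hd : 1 ≤ d)
    {X Ω : Type*} [MeasurableSpace X] [MeasurableSpace Ω]
    (p : Measure X) (P : Measure Ω) [IsProbabilityMeasure p] [IsProbabilityMeasure P]
    (a b : X → EuclideanSpace ℝ (Fin d)) (S : X × Ω → EuclideanSpace ℝ (Fin d))
    (ha : Measurable a) (hb : Measurable b) (hS : Measurable S)
    (C₂ : ℝ) (hC₂ : 0 ≤ C₂) (L : ℝ) (hL : 1 ≤ L)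
    (c : X → ℝ) (hc : ∀ x, 0 ≤ c x)
    (hcInt : Integrable c p) (hc2Int : Integrable (fun x => c x ^ 2) p)
    (hae : ∀ᵐ x ∂p, ‖a x - b x‖ ≤ C₂ ∧
      (∫ ω, ‖S (x, ω) - b x‖ ∂P) ≤ c x / Real.sqrt L ∧
      (∫ ω, ‖S (x, ω) - b x‖ ^ 2 ∂P) ≤ c x ^ 2 / L)
    (hInt1 : Integrable (fun q : X × Ω => ‖a q.1 - S q‖ ^ 2) (p.prod P))
    (hInt2 : Integrable (fun x => ‖a x - b x‖ ^ 2) p) :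
    |(∫ x, ∫ ω, ‖a x - S (x, ω)‖ ^ 2 ∂P ∂p) - ∫ x, ‖a x - b x‖ ^ 2 ∂p| ≤
      (∫ x, c x ^ 2 ∂p) / L + 2 * C₂ * (∫ x, c x ∂p) / Real.sqrt L := by
  have hL0 : (0 : ℝ) < L := lt_of_lt_of_le one_pos hL
  have hsL : (0 : ℝ) < Real.sqrt L := Real.sqrt_pos.mpr hL0
  set f : X → ℝ := fun x => ∫ ω, ‖a x - S (x, ω)‖ ^ 2 ∂P with hf
  set g : X → ℝ := fun x => ‖a x - b x‖ ^ 2 with hg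
  set B : X → ℝ := fun x => c x ^ 2 / L + 2 * C₂ * c x / Real.sqrt L with hB
  have hfInt : Integrable f p := hInt1.integral_prod_left
  have hBInt : Integrable B p := by
    apply ((hc2Int.div_const L)).add
    simpa [mul_div_assoc] using (hcInt.div_const (Real.sqrt L)).const_mul (2 * C₂)
  -- a.e. pointwise bound |f x - g x| ≤ B x
  have key : ∀ᵐ x ∂p, |f x - g x| ≤ B x := by
    filter_upwards [hae, hInt1.prod_right_ae] with x hx hIx
    obtain ⟨hab, h1, h2⟩ := hx
    -- measurability of ω ↦ S (x, ω)
    have hmS : Measurable fun ω => S (x, ω) := hS.comp measurable_prodMk_left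
    have hmeas1 : AEStronglyMeasurable (fun ω => ‖S (x, ω) - b x‖ ^ 2) P :=
      (((hmS.sub measurable_const).norm.pow_const 2)).aestronglyMeasurable
    have hmeas0 : AEStronglyMeasurable (fun ω => ‖S (x, ω) - b x‖) P :=
      ((hmS.sub measurable_const).norm).aestronglyMeasurable
    -- integrability of second moment of error
    have hI2 : Integrable (fun ω => ‖S (x, ω) - b x‖ ^ 2) P := by
      refine Integrable.mono' ((hIx.const_mul 2).add (integrable_const (2 * ‖a x - b x‖ ^ 2)))
        hmeas1 ?_
      filter_upwards with ω
      have htri : ‖S (x, ω) - b x‖ ≤ ‖a x - S (x, ω)‖ + ‖a x - b x‖ := by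
        have : S (x, ω) - b x = (a x - b x) - (a x - S (x, ω)) := by abel
        rw [this]
        calc ‖(a x - b x) - (a x - S (x, ω))‖ ≤ ‖a x - b x‖ + ‖a x - S (x, ω)‖ :=
          norm_sub_le _ _
        _ = ‖a x - S (x, ω)‖ + ‖a x - b x‖ := by ring
      have h0 : (0:ℝ) ≤ ‖S (x, ω) - b x‖ := norm_nonneg _
      have := sq_le_sq' (by linarith [norm_nonneg (a x - S (x,ω)), norm_nonneg (a x - b x)]) htri
      have hsq : ‖S (x, ω) - b x‖ ^ 2 ≤ (‖a x - S (x, ω)‖ + ‖a x - b x‖) ^ 2 := this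
      have h2ab : (‖a x - S (x, ω)‖ + ‖a x - b x‖) ^ 2 ≤
          2 * ‖a x - S (x, ω)‖ ^ 2 + 2 * ‖a x - b x‖ ^ 2 := by nlinarith [sq_nonneg (‖a x - S (x, ω)‖ - ‖a x - b x‖)]
      simp only [Pi.add_apply]
      rw [Real.norm_eq_abs, abs_of_nonneg (by positivity)]
      linarith
    have hI1 : Integrable (fun ω => ‖S (x, ω) - b x‖) P := by
      refine Integrable.mono' (hI2.add (integrable_const 1)) hmeas0 ?_
      filter_upwards with ω
      simp only [Pi.add_apply]
      rw [Real.norm_eq_abs, abs_of_nonneg (norm_nonneg _)]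
      nlinarith [sq_nonneg (‖S (x, ω) - b x‖ - 1), norm_nonneg (S (x, ω) - b x)]
    -- pointwise: |‖a-S‖² - ‖a-b‖²| ≤ 2C₂‖S-b‖ + ‖S-b‖²
    have hpt : ∀ ω, |‖a x - S (x, ω)‖ ^ 2 - ‖a x - b x‖ ^ 2| ≤
        2 * C₂ * ‖S (x, ω) - b x‖ + ‖S (x, ω) - b x‖ ^ 2 := by
      intro ω
      have hdecomp : a x - S (x, ω) = (a x - b x) + (b x - S (x, ω)) := by abel
      have hexp := norm_add_sq_real (a x - b x) (b x - S (x, ω))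
      rw [hdecomp, hexp]
      have hnn : ‖b x - S (x, ω)‖ = ‖S (x, ω) - b x‖ := norm_sub_rev _ _
      have hinner : |(inner ℝ (a x - b x) (b x - S (x, ω)) : ℝ)| ≤
          ‖a x - b x‖ * ‖b x - S (x, ω)‖ := abs_real_inner_le_norm _ _
      have hbd : ‖a x - b x‖ * ‖b x - S (x, ω)‖ ≤ C₂ * ‖b x - S (x, ω)‖ :=
        mul_le_mul_of_nonneg_right hab (norm_nonneg _)
      obtain ⟨hl, hr⟩ := abs_le.mp hinner
      rw [← hnn, abs_le]
      constructor <;> nlinarith [sq_nonneg ‖b x - S (x, ω)‖, norm_nonneg (b x - S (x, ω))]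
    -- integrate the pointwise bound
    have hfg : f x - g x = ∫ ω, (‖a x - S (x, ω)‖ ^ 2 - ‖a x - b x‖ ^ 2) ∂P := by
      rw [integral_sub hIx (integrable_const _), integral_const]
      simp [hf, hg]
    rw [hfg]
    have habs : |∫ ω, (‖a x - S (x, ω)‖ ^ 2 - ‖a x - b x‖ ^ 2) ∂P|
        ≤ ∫ ω, |‖a x - S (x, ω)‖ ^ 2 - ‖a x - b x‖ ^ 2| ∂P := by
      simpa [Real.norm_eq_abs] using
        norm_integral_le_integral_norm fun ω => ‖a x - S (x, ω)‖ ^ 2 - ‖a x - b x‖ ^ 2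
    refine habs.trans ?_
    calc ∫ ω, |‖a x - S (x, ω)‖ ^ 2 - ‖a x - b x‖ ^ 2| ∂P
        ≤ ∫ ω, (2 * C₂ * ‖S (x, ω) - b x‖ + ‖S (x, ω) - b x‖ ^ 2) ∂P := by
          refine integral_mono_ae ((hIx.sub (integrable_const _)).abs)
            ((hI1.const_mul (2 * C₂)).add hI2) ?_
          filter_upwards with ω using hpt ω
      _ = 2 * C₂ * (∫ ω, ‖S (x, ω) - b x‖ ∂P) + ∫ ω, ‖S (x, ω) - b x‖ ^ 2 ∂P := by
          rw [integral_add (hI1.const_mul (2 * C₂)) hI2, integral_const_mul]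
      _ ≤ 2 * C₂ * (c x / Real.sqrt L) + c x ^ 2 / L := by
          have := mul_le_mul_of_nonneg_left h1 (by positivity : (0:ℝ) ≤ 2 * C₂)
          linarith
      _ = B x := by simp only [hB]; ring
  -- conclude
  have hmain : |(∫ x, f x ∂p) - ∫ x, g x ∂p| ≤ ∫ x, B x ∂p := by
    rw [← integral_sub hfInt hInt2]
    have habs : |∫ x, (f x - g x) ∂p| ≤ ∫ x, |f x - g x| ∂p := by
      simpa [Real.norm_eq_abs] using norm_integral_le_integral_norm fun x => f x - g x
    exact habs.trans (integral_mono_ae ((hfInt.sub hInt2).abs) hBInt key)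
  have hBval : ∫ x, B x ∂p = (∫ x, c x ^ 2 ∂p) / L + 2 * C₂ * (∫ x, c x ∂p) / Real.sqrt L := by
    rw [hB]
    rw [integral_add (hc2Int.div_const L)
      (by simpa [mul_div_assoc] using (hcInt.div_const (Real.sqrt L)).const_mul (2 * C₂))]
    rw [integral_div]
    congr 1
    rw [show (fun x => 2 * C₂ * c x / Real.sqrt L) = fun x => (2 * C₂ / Real.sqrt L) * c x by
      funext x; ring, integral_const_mul]
    ring
  calc |(∫ x, ∫ ω, ‖a x - S (x, ω)‖ ^ 2 ∂P ∂p) - ∫ x, ‖a x - b x‖ ^ 2 ∂p|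
      = |(∫ x, f x ∂p) - ∫ x, g x ∂p| := rfl
    _ ≤ ∫ x, B x ∂p := hmain
    _ = _ := hBval
end

section
/- The function p_t is everywhere positive and differentiable on ℝ^d, and its log-gradient satisfies ∇ log p_t(x) = −(∫ φ_σ(x − x₀) e^{−E(x₀)} ∇E(x₀) dx₀) / (∫ φ_σ(x − x₀) e^{−E(x₀)} dx₀) for every x ∈ ℝ^d; that is, the score of the Gaussian-smoothed Boltzmann density equals the ratio of the Gaussian expectation of ∇(e^{−E}) to the Gaussian expectation of e^{−E}. -/
open MeasureTheory Real InnerProductSpace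

set_option maxHeartbeats 1000000 in
/-- The Gaussian-smoothed Boltzmann density `p_t` is positive and differentiable, and its
log-gradient (score) is the ratio of the Gaussian expectation of `∇(e^{-E})` to the
Gaussian expectation of `e^{-E}`. -/
theorem stmt_7 (d : ℕ) (hd : 1 ≤ d) (E : EuclideanSpace ℝ (Fin d) → ℝ)
    (Emin M : ℝ) (hE : Differentiable ℝ E) (hEmin : ∀ x, Emin ≤ E x)
    (hM : ∀ x, ‖gradient E x‖ ≤ M)
    (hZfin : Integrable fun x => Real.exp (-(E x)))
    (hZpos : 0 < ∫ x, Real.exp (-(E x)))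
    (σ : ℝ) (hσ : 0 < σ) :
    let φ : EuclideanSpace ℝ (Fin d) → ℝ :=
      fun u => (2 * Real.pi * σ ^ 2) ^ (-(d : ℝ) / 2) * Real.exp (-‖u‖ ^ 2 / (2 * σ ^ 2))
    let Z : ℝ := ∫ x, Real.exp (-(E x))
    let pt : EuclideanSpace ℝ (Fin d) → ℝ :=
      fun x => Z⁻¹ * ∫ x₀, φ (x - x₀) * Real.exp (-(E x₀))
    (∀ x, 0 < pt x) ∧ Differentiable ℝ pt ∧
      ∀ x, gradient (fun y => Real.log (pt y)) x =
        -((∫ x₀, φ (x - x₀) * Real.exp (-(E x₀)))⁻¹ •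
          ∫ x₀, (φ (x - x₀) * Real.exp (-(E x₀))) • gradient E x₀) := by
  intro φ Z pt
  have hσ2 : (0:ℝ) < 2 * Real.pi * σ ^ 2 := by positivity
  have hCpos : (0:ℝ) < (2 * Real.pi * σ ^ 2) ^ (-(d : ℝ) / 2) :=
    Real.rpow_pos_of_pos hσ2 _
  have hφdef : ∀ u : EuclideanSpace ℝ (Fin d),
      φ u = (2 * Real.pi * σ ^ 2) ^ (-(d : ℝ) / 2) * Real.exp (-‖u‖ ^ 2 / (2 * σ ^ 2)) :=
    fun _ => rfl
  have hφpos : ∀ u, 0 < φ u := fun u => by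
    rw [hφdef]; exact mul_pos hCpos (Real.exp_pos _)
  have hφcont : Continuous φ := by
    have : φ = fun u : EuclideanSpace ℝ (Fin d) =>
        (2 * Real.pi * σ ^ 2) ^ (-(d : ℝ) / 2) * Real.exp (-‖u‖ ^ 2 / (2 * σ ^ 2)) := rfl
    rw [this]
    exact continuous_const.mul (Real.continuous_exp.comp (by fun_prop))
  have hφle : ∀ u : EuclideanSpace ℝ (Fin d), φ u ≤ (2 * Real.pi * σ ^ 2) ^ (-(d : ℝ) / 2) := by
    intro u
    have h1 : Real.exp (-‖u‖ ^ 2 / (2 * σ ^ 2)) ≤ 1 := by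
      rw [Real.exp_le_one_iff]
      have h2 : (0:ℝ) ≤ ‖u‖ ^ 2 / (2 * σ ^ 2) := by positivity
      rw [neg_div]; linarith
    rw [hφdef]
    calc (2 * Real.pi * σ ^ 2) ^ (-(d : ℝ) / 2) * Real.exp (-‖u‖ ^ 2 / (2 * σ ^ 2))
        ≤ (2 * Real.pi * σ ^ 2) ^ (-(d : ℝ) / 2) * 1 :=
          mul_le_mul_of_nonneg_left h1 hCpos.le
      _ = _ := mul_one _
  -- integrability of the Gaussian kernel
  have hφint : Integrable φ := by
    have hb : (0:ℝ) < (2 * σ ^ 2)⁻¹ := by positivity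
    have h1 := (GaussianFourier.integrable_cexp_neg_mul_sq_norm_add
      (V := EuclideanSpace ℝ (Fin d)) (b := ((2 * σ ^ 2)⁻¹ : ℝ))
      (by rw [Complex.ofReal_re]; exact hb) 0 (0 : EuclideanSpace ℝ (Fin d))).re
    have h2 : Integrable (fun v : EuclideanSpace ℝ (Fin d) =>
        Real.exp (-(2 * σ ^ 2)⁻¹ * ‖v‖ ^ 2)) := by
      refine h1.congr (Filter.Eventually.of_forall fun v => ?_)
      have hA : (-(((2 * σ ^ 2)⁻¹ : ℝ) : ℂ) * (‖v‖ : ℂ) ^ 2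
          + 0 * ((inner ℝ (0 : EuclideanSpace ℝ (Fin d)) v : ℝ) : ℂ))
          = ((-(2 * σ ^ 2)⁻¹ * ‖v‖ ^ 2 : ℝ) : ℂ) := by push_cast; ring
      simp only [hA, ← Complex.ofReal_exp]
      rfl
    have h4 : φ = fun u : EuclideanSpace ℝ (Fin d) =>
        (2 * Real.pi * σ ^ 2) ^ (-(d : ℝ) / 2) * Real.exp (-(2 * σ ^ 2)⁻¹ * ‖u‖ ^ 2) := by
      funext u
      rw [hφdef]
      congr 1
      congr 1
      ring
    rw [h4]
    exact h2.const_mul _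
  have hEc : Continuous fun x : EuclideanSpace ℝ (Fin d) => Real.exp (-(E x)) :=
    Real.continuous_exp.comp hE.continuous.neg
  have hEle : ∀ z, Real.exp (-(E z)) ≤ Real.exp (-Emin) :=
    fun z => Real.exp_le_exp.2 (neg_le_neg (hEmin z))
  -- integrability of the integrand of f
  have hkint : ∀ x : EuclideanSpace ℝ (Fin d),
      Integrable (fun x₀ => φ (x - x₀) * Real.exp (-(E x₀))) := by
    intro x
    refine Integrable.mono' (hZfin.const_mul ((2 * Real.pi * σ ^ 2) ^ (-(d : ℝ) / 2)))
      (((hφcont.comp (continuous_const.sub continuous_id)).mul hEc).aestronglyMeasurable)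
      (Filter.Eventually.of_forall fun x₀ => ?_)
    rw [Real.norm_eq_abs, abs_of_pos (mul_pos (hφpos _) (Real.exp_pos _))]
    exact mul_le_mul_of_nonneg_right (hφle _) (Real.exp_pos _).le
  set f : EuclideanSpace ℝ (Fin d) → ℝ :=
    fun x => ∫ x₀, φ (x - x₀) * Real.exp (-(E x₀)) with hf
  have hfpos : ∀ x, 0 < f x := by
    intro x
    refine (integral_pos_iff_support_of_nonneg
      (fun x₀ => (mul_pos (hφpos _) (Real.exp_pos _)).le) (hkint x)).2 ?_
    have hsupp : Function.support (fun x₀ => φ (x - x₀) * Real.exp (-(E x₀))) = Set.univ := by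
      ext x₀
      simp only [Function.mem_support, Set.mem_univ, iff_true]
      exact (mul_pos (hφpos _) (Real.exp_pos _)).ne'
    rw [hsupp]
    exact isOpen_univ.measure_pos volume ⟨0, trivial⟩
  have hZne : Z ≠ 0 := ne_of_gt hZpos
  have hZinvpos : 0 < Z⁻¹ := inv_pos.2 hZpos
  have hptdef : ∀ x, pt x = Z⁻¹ * f x := fun _ => rfl
  have hptpos : ∀ x, 0 < pt x := fun x => by
    rw [hptdef]; exact mul_pos hZinvpos (hfpos x)
  have hMnn : 0 ≤ M := le_trans (norm_nonneg _) (hM 0)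
  have hM' : ∀ z, ‖fderiv ℝ E z‖ ≤ M := by
    intro z
    have h := hM z
    rwa [gradient, LinearIsometryEquiv.norm_map] at h
  -- the key derivative statement
  have key : ∀ x : EuclideanSpace ℝ (Fin d), HasFDerivAt f
      (∫ u, (φ u * Real.exp (-(E (x - u)))) • (-(fderiv ℝ E (x - u)))) x := by
    intro x
    have hF'meas : ∀ y : EuclideanSpace ℝ (Fin d), AEStronglyMeasurable
        (fun u : EuclideanSpace ℝ (Fin d) =>
          (φ u * Real.exp (-(E (y - u)))) • (-(fderiv ℝ E (y - u)))) volume := by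
      intro y
      apply Measurable.aestronglyMeasurable
      apply Measurable.smul (f := fun u => φ u * Real.exp (-(E (y - u))))
        (g := fun u => -(fderiv ℝ E (y - u)))
      · exact (hφcont.mul (hEc.comp (continuous_const.sub continuous_id))).measurable
      · exact ((measurable_fderiv ℝ E).comp (measurable_id.const_sub y)).neg
    have hbound_int : Integrable (fun u => φ u * (Real.exp (-Emin) * M)) :=
      hφint.mul_const _
    have hbound : ∀ (u y : EuclideanSpace ℝ (Fin d)),
        ‖(φ u * Real.exp (-(E (y - u)))) • (-(fderiv ℝ E (y - u)))‖
          ≤ φ u * (Real.exp (-Emin) * M) := by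
      intro u y
      rw [norm_smul, norm_neg, Real.norm_eq_abs,
        abs_of_pos (mul_pos (hφpos u) (Real.exp_pos _)), mul_assoc]
      refine mul_le_mul_of_nonneg_left ?_ (hφpos u).le
      exact mul_le_mul (hEle _) (hM' _) (norm_nonneg _) (Real.exp_pos _).le
    have hdiff : ∀ (u y : EuclideanSpace ℝ (Fin d)),
        HasFDerivAt (fun y => φ u * Real.exp (-(E (y - u))))
          ((φ u * Real.exp (-(E (y - u)))) • (-(fderiv ℝ E (y - u)))) y := by
      intro u y
      have h1 : HasFDerivAt (fun y : EuclideanSpace ℝ (Fin d) => E (y - u))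
          (fderiv ℝ E (y - u)) y := by
        have h0 := (hE (y - u)).hasFDerivAt.comp y ((hasFDerivAt_id y).sub_const u)
        exact h0
      have h3 : HasFDerivAt (fun y : EuclideanSpace ℝ (Fin d) => Real.exp (-(E (y - u))))
          (Real.exp (-(E (y - u))) • (-(fderiv ℝ E (y - u)))) y := h1.neg.exp
      have h4 := h3.const_mul (φ u)
      exact h4.congr_fderiv (smul_smul _ _ _)
    have hFint : ∀ y : EuclideanSpace ℝ (Fin d),
        Integrable (fun u => φ u * Real.exp (-(E (y - u)))) := by
      intro y
      refine Integrable.mono' (hφint.mul_const (Real.exp (-Emin)))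
        ((hφcont.mul (hEc.comp (continuous_const.sub continuous_id))).aestronglyMeasurable)
        (Filter.Eventually.of_forall fun u => ?_)
      rw [Real.norm_eq_abs, abs_of_pos (mul_pos (hφpos _) (Real.exp_pos _))]
      exact mul_le_mul_of_nonneg_left (hEle _) (hφpos _).le
    have hder : HasFDerivAt (fun y => ∫ u, φ u * Real.exp (-(E (y - u))))
        (∫ u, (φ u * Real.exp (-(E (x - u)))) • (-(fderiv ℝ E (x - u)))) x := by
      exact hasFDerivAt_integral_of_dominated_of_fderiv_le (s := Set.univ)
        (F := fun y u => φ u * Real.exp (-(E (y - u))))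
        (F' := fun y u => (φ u * Real.exp (-(E (y - u)))) • (-(fderiv ℝ E (y - u)))) Filter.univ_mem
        (Filter.Eventually.of_forall fun y =>
          ((hφcont.mul (hEc.comp (continuous_const.sub continuous_id))).aestronglyMeasurable))
        (hFint x) (hF'meas x)
        (Filter.Eventually.of_forall fun u y _ => hbound u y)
        hbound_int
        (Filter.Eventually.of_forall fun u y _ => hdiff u y)
    have hfeq : f = fun y => ∫ u, φ u * Real.exp (-(E (y - u))) := by
      funext y
      have h5 := integral_sub_left_eq_self
        (fun t => φ (y - t) * Real.exp (-(E t))) volume y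
      simp only [sub_sub_cancel] at h5
      exact h5.symm
    rw [hfeq]
    exact hder
  -- express the gradient of f
  set w : EuclideanSpace ℝ (Fin d) → EuclideanSpace ℝ (Fin d) :=
    fun x => ∫ x₀, (φ (x - x₀) * Real.exp (-(E x₀))) • gradient E x₀ with hw
  have hgradf : ∀ x, HasGradientAt f (-(w x)) x := by
    intro x
    have hG := (key x).hasGradientAt
    have hcomm := LinearIsometry.integral_comp_comm
      (toDual ℝ (EuclideanSpace ℝ (Fin d))).symm.toLinearIsometry
      (fun u => (φ u * Real.exp (-(E (x - u)))) • (-(fderiv ℝ E (x - u)))) (μ := volume)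
    rw [LinearIsometryEquiv.coe_toLinearIsometry] at hcomm
    have hptw : ∀ u : EuclideanSpace ℝ (Fin d),
        (toDual ℝ (EuclideanSpace ℝ (Fin d))).symm
          ((φ u * Real.exp (-(E (x - u)))) • (-(fderiv ℝ E (x - u))))
        = -((φ u * Real.exp (-(E (x - u)))) • gradient E (x - u)) := by
      intro u
      rw [_root_.map_smul, _root_.map_neg, smul_neg]
      rfl
    have hcov := integral_sub_left_eq_self
      (fun t => (φ (x - t) * Real.exp (-(E t))) • gradient E t) volume x
    simp only [sub_sub_cancel] at hcov
    have heq : (toDual ℝ (EuclideanSpace ℝ (Fin d))).symm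
        (∫ u, (φ u * Real.exp (-(E (x - u)))) • (-(fderiv ℝ E (x - u)))) = -(w x) := by
      rw [← hcomm]
      simp_rw [hptw]
      rw [integral_neg]
      exact congrArg Neg.neg hcov
    rwa [heq] at hG
  have hptfd : ∀ x, HasGradientAt pt (Z⁻¹ • (-(w x))) x := by
    intro x
    have h1 := ((hgradf x).hasFDerivAt.const_mul Z⁻¹)
    have h2 : HasFDerivAt pt
        (Z⁻¹ • ((toDual ℝ (EuclideanSpace ℝ (Fin d))) (-(w x)))) x := h1
    have h3 := h2.hasGradientAt
    rwa [_root_.map_smul, LinearIsometryEquiv.symm_apply_apply] at h3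
  refine ⟨hptpos, fun x => ((hptfd x).differentiableAt), fun x => ?_⟩
  have hlog : HasFDerivAt (fun y => Real.log (pt y))
      ((pt x)⁻¹ • ((toDual ℝ (EuclideanSpace ℝ (Fin d))) (Z⁻¹ • (-(w x))))) x :=
    (hptfd x).hasFDerivAt.log (ne_of_gt (hptpos x))
  have hg := hlog.hasGradientAt
  rw [_root_.map_smul, LinearIsometryEquiv.symm_apply_apply] at hg
  rw [hg.gradient]
  have hfx : f x ≠ 0 := ne_of_gt (hfpos x)
  rw [smul_smul, hptdef x]
  have hscal : ((Z⁻¹ * f x)⁻¹ * Z⁻¹) = (f x)⁻¹ := by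
    field_simp
  rw [hscal, smul_neg]
end
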